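/- One has ℂ[z] = D(ℂ[z]) + ℂ[z]_{<N} and D(ℂ[z]) ∩ ℂ[z]_{<N} = D(ℂ[z]_{<M}); consequently the inclusion ℂ[z]_{<N} ⊆ ℂ[z] induces a bijective ℂ-linear map ℂ[z]_{<N} / D(ℂ[z]_{<M}) → ℂ[z] / D(ℂ[z]). -/

import Mathlib

open Complex Polynomial Finset

/-- The differential operator `D f = ∑_{j=0}^{μ} P_{μ-j} · f^{(j)}`. -/
noncomputable def Dop (μ : ℕ) (P : ℕ → Polynomial ℂ) (f : ℂ → ℂ) : ℂ → ℂ :=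
  fun z => ∑ j ∈ Finset.range (μ + 1), (P (μ - j)).eval z * iteratedDeriv j f z

/-- The polynomial `R(Y) = ∑_{j=0}^{μ} a_{μ-j} · Y(Y-1)⋯(Y-j+1)`, where `a_i` is the
coefficient of `z^{δ-i}` in `P_i`. -/
noncomputable def Rpoly (μ δ : ℕ) (P : ℕ → Polynomial ℂ) : Polynomial ℂ :=
  ∑ j ∈ Finset.range (μ + 1),
    Polynomial.C ((P (μ - j)).coeff (δ - (μ - j))) *
      ∏ l ∈ Finset.range j, (Polynomial.X - Polynomial.C (l : ℂ))

/-- The set of finite singularities of `D`: the roots of `P₀`. -/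
def Sing (P0 : Polynomial ℂ) : Set ℂ := {ρ : ℂ | P0.eval ρ = 0}

/-- The cut plane `Ω_θ`: the plane minus the closed half-lines of direction `π - θ`
starting at the points of `S`. -/
def cutPlane (S : Set ℂ) (θ : ℝ) : Set ℂ :=
  {z : ℂ | ∀ ρ ∈ S, ∀ t : ℝ, 0 ≤ t →
    z ≠ ρ + (t : ℂ) * Complex.exp (Complex.I * ((Real.pi - θ : ℝ) : ℂ))}

/-- The cut disk `D_ρ(ε)` at `ρ`. -/
def cutDisk (ρ : ℂ) (θ : ℝ) (ε : ℝ) : Set ℂ :=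
  {z : ℂ | 0 < ‖z - ρ‖ ∧ ‖z - ρ‖ < ε ∧
    ∀ t : ℝ, 0 ≤ t → z - ρ ≠ (t : ℂ) * Complex.exp (Complex.I * ((Real.pi - θ : ℝ) : ℂ))}

/-- `g`, holomorphic on the cut disk `D_ρ(ε)`, extends holomorphically at `ρ`. -/
def ExtendsHolAt (g : ℂ → ℂ) (ρ : ℂ) (θ : ℝ) (ε : ℝ) : Prop :=
  ∃ ε' : ℝ, 0 < ε' ∧ ε' ≤ ε ∧ ∃ h : ℂ → ℂ,
    DifferentiableOn ℂ h (Metric.ball ρ ε') ∧ ∀ z ∈ cutDisk ρ θ ε', g z = h z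

/-- `θ` is an admissible direction for the singularity set `S`:
`ρ - ρ' ∉ ℝ · e^{-iθ}` for all distinct `ρ, ρ' ∈ S`. -/
def GoodDirection (S : Set ℂ) (θ : ℝ) : Prop :=
  ∀ ρ ∈ S, ∀ ρ' ∈ S, ρ ≠ ρ' → ∀ t : ℝ,
    ρ - ρ' ≠ (t : ℂ) * Complex.exp (-Complex.I * (θ : ℂ))
/-- The operator `D` acting on polynomials, as a linear map `ℂ[z] → ℂ[z]`. -/
noncomputable def DLin (μ : ℕ) (P : ℕ → Polynomial ℂ) :
    Polynomial ℂ →ₗ[ℂ] Polynomial ℂ :=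
  ∑ j ∈ Finset.range (μ + 1),
    LinearMap.comp (LinearMap.mulLeft ℂ (P (μ - j)))
      ((Polynomial.derivative : Module.End ℂ (Polynomial ℂ)) ^ j)

private lemma prod_range_sub_cast (k j : ℕ) :
    ∏ l ∈ Finset.range j, ((k : ℂ) - (l : ℂ)) = (k.descFactorial j : ℂ) := by
  induction j with
  | zero => simp
  | succ j ih =>
    rw [Finset.prod_range_succ, ih, Nat.descFactorial_succ]
    rcases le_or_gt j k with h | h
    · push_cast [h]
      ring
    · rw [Nat.descFactorial_eq_zero_iff_lt.mpr h]
      simp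

private lemma DLin_apply (μ : ℕ) (P : ℕ → Polynomial ℂ) (q : Polynomial ℂ) :
    DLin μ P q = ∑ j ∈ Finset.range (μ + 1),
      P (μ - j) * (Polynomial.derivative^[j] q) := by
  simp [DLin, LinearMap.sum_apply, LinearMap.mulLeft_apply, Module.End.pow_apply]

private lemma DLin_coeff (μ : ℕ) (P : ℕ → Polynomial ℂ) (q : Polynomial ℂ) (n : ℕ) :
    (DLin μ P q).coeff n = ∑ j ∈ Finset.range (μ + 1),
      ∑ x ∈ Finset.HasAntidiagonal.antidiagonal n,
        (P (μ - j)).coeff x.1 * (((x.2 + j).descFactorial j : ℂ) * q.coeff (x.2 + j)) := by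
  rw [DLin_apply, Polynomial.finset_sum_coeff]
  refine Finset.sum_congr rfl fun j _ => ?_
  rw [Polynomial.coeff_mul]
  refine Finset.sum_congr rfl fun x _ => ?_
  rw [Polynomial.coeff_iterate_derivative, nsmul_eq_mul]

private lemma DLin_coeff_eq_zero (μ δ : ℕ) (P : ℕ → Polynomial ℂ)
    (hdeg : ∀ i, i ≤ μ → ∀ k, δ < k + i → (P i).coeff k = 0)
    (q : Polynomial ℂ) (k : ℕ) (hq : ∀ m, k ≤ m → q.coeff m = 0)
    (n : ℕ) (hn : δ + k ≤ n + μ) :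
    (DLin μ P q).coeff n = 0 := by
  rw [DLin_coeff]
  refine Finset.sum_eq_zero fun j hj => Finset.sum_eq_zero fun x hx => ?_
  have hj' : j ≤ μ := by simpa [Nat.lt_succ_iff] using Finset.mem_range.mp hj
  have hx' : x.1 + x.2 = n := Finset.HasAntidiagonal.mem_antidiagonal.mp hx
  rcases lt_or_ge δ (x.1 + (μ - j)) with h | h
  · rw [hdeg (μ - j) (Nat.sub_le _ _) x.1 (by omega)]; ring
  · rw [hq (x.2 + j) (by omega)]; ring

private lemma Rpoly_eval (μ δ : ℕ) (P : ℕ → Polynomial ℂ) (k : ℕ) :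
    (Rpoly μ δ P).eval (k : ℂ) = ∑ j ∈ Finset.range (μ + 1),
      (P (μ - j)).coeff (δ - (μ - j)) * (k.descFactorial j : ℂ) := by
  rw [Rpoly, Polynomial.eval_finset_sum]
  refine Finset.sum_congr rfl fun j _ => ?_
  rw [Polynomial.eval_mul, Polynomial.eval_C, Polynomial.eval_prod]
  congr 1
  rw [← prod_range_sub_cast k j]
  exact Finset.prod_congr rfl fun l _ => by simp

private lemma DLin_coeff_top (μ δ : ℕ) (P : ℕ → Polynomial ℂ)
    (hdeg : ∀ i, i ≤ μ → ∀ k, δ < k + i → (P i).coeff k = 0)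
    (q : Polynomial ℂ) (k n : ℕ) (hq : ∀ m, k < m → q.coeff m = 0)
    (hn : n + μ = δ + k) :
    (DLin μ P q).coeff n = q.coeff k * (Rpoly μ δ P).eval (k : ℂ) := by
  rw [DLin_coeff, Rpoly_eval, Finset.mul_sum]
  refine Finset.sum_congr rfl fun j hj => ?_
  have hj' : j ≤ μ := by simpa [Nat.lt_succ_iff] using Finset.mem_range.mp hj
  by_cases hjk : j ≤ k ∧ μ - j ≤ δ
  · obtain ⟨h1, h2⟩ := hjk
    rw [Finset.sum_eq_single (δ - (μ - j), k - j)]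
    · simp only
      rw [show k - j + j = k by omega]
      ring
    · intro x hx hne
      have hx' : x.1 + x.2 = n := Finset.HasAntidiagonal.mem_antidiagonal.mp hx
      rcases lt_or_ge δ (x.1 + (μ - j)) with h | h
      · rw [hdeg (μ - j) (Nat.sub_le _ _) x.1 (by omega)]; ring
      · rcases lt_or_ge k (x.2 + j) with h3 | h3
        · rw [hq _ h3]; ring
        · exact absurd (Prod.ext (show x.1 = δ - (μ - j) by omega)
            (show x.2 = k - j by omega)) hne
    · intro h
      exact absurd (Finset.HasAntidiagonal.mem_antidiagonal.mpr (show δ - (μ - j) + (k - j) = n by omega)) h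
  · rcases not_and_or.mp hjk with h | h
    · push_neg at h
      rw [Nat.descFactorial_eq_zero_iff_lt.mpr h, Nat.cast_zero, mul_zero, mul_zero]
      refine Finset.sum_eq_zero fun x hx => ?_
      rw [hq (x.2 + j) (by omega)]; ring
    · push_neg at h
      have hP : ∀ a, (P (μ - j)).coeff a = 0 :=
        fun a => hdeg (μ - j) (Nat.sub_le _ _) a (by omega)
      rw [hP, Finset.sum_eq_zero fun x _ => by rw [hP]; ring]
      ring

/-- `ℂ[z] = D(ℂ[z]) + ℂ[z]_{<N}`, `D(ℂ[z]) ∩ ℂ[z]_{<N} = D(ℂ[z]_{<M})`, and the inclusion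
`ℂ[z]_{<N} ⊆ ℂ[z]` induces a bijective linear map
`ℂ[z]_{<N} / D(ℂ[z]_{<M}) → ℂ[z] / D(ℂ[z])`. -/
theorem quotient_by_range_D
    (μ δ M N : ℕ) (P : ℕ → Polynomial ℂ)
    (hμ : 1 ≤ μ)
    (hlead : (P 0).coeff δ ≠ 0)
    (hdeg : ∀ i, i ≤ μ → ∀ k, δ < k + i → (P i).coeff k = 0)
    (hM1 : μ ≤ δ + M)
    (hM2 : ∀ k : ℕ, M ≤ k → (Rpoly μ δ P).eval (k : ℂ) ≠ 0)
    (hMmin : ∀ M' : ℕ, M' < M →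
      ¬ (μ ≤ δ + M' ∧ ∀ k : ℕ, M' ≤ k → (Rpoly μ δ P).eval (k : ℂ) ≠ 0))
    (hN : N + μ = M + δ) :
    (⊤ : Submodule ℂ (Polynomial ℂ))
        = LinearMap.range (DLin μ P) ⊔ Polynomial.degreeLT ℂ N ∧
    LinearMap.range (DLin μ P) ⊓ Polynomial.degreeLT ℂ N
        = Submodule.map (DLin μ P) (Polynomial.degreeLT ℂ M) ∧
    ∃ e : ((Polynomial.degreeLT ℂ N : Submodule ℂ (Polynomial ℂ)) ⧸
            (Submodule.map (DLin μ P) (Polynomial.degreeLT ℂ M)).comap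
              (Polynomial.degreeLT ℂ N).subtype) ≃ₗ[ℂ]
          (Polynomial ℂ ⧸ LinearMap.range (DLin μ P)),
      ∀ q : (Polynomial.degreeLT ℂ N : Submodule ℂ (Polynomial ℂ)),
        e (Submodule.Quotient.mk q) = Submodule.Quotient.mk (q : Polynomial ℂ) := by
  have hdeg' := hdeg
  -- Abbreviations
  set A : Submodule ℂ (Polynomial ℂ) := LinearMap.range (DLin μ P) with hA
  set B : Submodule ℂ (Polynomial ℂ) := Polynomial.degreeLT ℂ N with hB
  -- Claim 1 : ⊤ = A ⊔ B
  have hsup : ∀ p : Polynomial ℂ, p ∈ A ⊔ B := by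
    have key : ∀ d : ℕ, ∀ p : Polynomial ℂ, p.degree < (d : WithBot ℕ) → p ∈ A ⊔ B := by
      intro d
      induction d with
      | zero =>
        intro p hp
        have h0 : p.degree < 0 := by simpa using hp
        rw [Polynomial.degree_eq_bot.mp (Nat.WithBot.lt_zero_iff.mp h0)]
        exact Submodule.zero_mem _
      | succ d ih =>
        intro p hp
        by_cases hNp : p.degree < (N : WithBot ℕ)
        · exact Submodule.mem_sup_right (Polynomial.mem_degreeLT.mpr hNp)
        · push_neg at hNp
          have hp0 : p ≠ 0 := by
            intro h
            rw [h, Polynomial.degree_zero] at hNp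
            exact absurd hNp (by simp)
          set n := p.natDegree with hn
          have hNn : N ≤ n := by
            have := le_trans hNp (Polynomial.degree_le_natDegree)
            exact_mod_cast this
          have hnd : n ≤ d := by
            have := (Polynomial.natDegree_lt_iff_degree_lt hp0).mpr hp
            omega
          set k := n - N + M with hk
          have hRk : (Rpoly μ δ P).eval (k : ℂ) ≠ 0 := hM2 k (by omega)
          have hnk : n + μ = δ + k := by omega
          set c : ℂ := p.coeff n / (Rpoly μ δ P).eval (k : ℂ) with hc
          set u : Polynomial ℂ := Polynomial.C c * Polynomial.X ^ k with hu
          have hucoeff : ∀ m, k < m → u.coeff m = 0 := by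
            intro m hm
            rw [hu, Polynomial.coeff_C_mul, Polynomial.coeff_X_pow, if_neg (by omega), mul_zero]
          have huk : u.coeff k = c := by
            rw [hu, Polynomial.coeff_C_mul, Polynomial.coeff_X_pow, if_pos rfl, mul_one]
          set p' : Polynomial ℂ := p - DLin μ P u with hp'
          have hp'deg : p'.degree < (n : WithBot ℕ) := by
            rw [Polynomial.degree_lt_iff_coeff_zero]
            intro m hm
            rcases eq_or_lt_of_le hm with h | h
            · rw [hp', Polynomial.coeff_sub, ← h,
                DLin_coeff_top μ δ P hdeg u k n hucoeff hnk, huk, hc,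
                div_mul_cancel₀ _ hRk, sub_self]
            · rw [hp', Polynomial.coeff_sub,
                Polynomial.coeff_eq_zero_of_natDegree_lt (by omega),
                DLin_coeff_eq_zero μ δ P hdeg u (k + 1)
                  (fun m' hm' => hucoeff m' (by omega)) m (by omega), sub_self]
          have hmem' : p' ∈ A ⊔ B :=
            ih p' (lt_of_lt_of_le hp'deg (by exact_mod_cast hnd))
          have : p = p' + DLin μ P u := by rw [hp']; ring
          rw [this]
          exact Submodule.add_mem _ hmem' (Submodule.mem_sup_left ⟨u, rfl⟩)
    intro p
    refine key (p.natDegree + 1) p ?_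
    exact lt_of_le_of_lt Polynomial.degree_le_natDegree (by exact_mod_cast Nat.lt_succ_self _)
  have claim1 : (⊤ : Submodule ℂ (Polynomial ℂ)) = A ⊔ B :=
    (Submodule.eq_top_iff'.mpr hsup).symm
  -- Claim 2 : A ⊓ B = map D (degreeLT M)
  have hmapB : ∀ q : Polynomial ℂ, q ∈ Polynomial.degreeLT ℂ M → DLin μ P q ∈ B := by
    intro q hq
    rw [hB, Polynomial.mem_degreeLT, Polynomial.degree_lt_iff_coeff_zero]
    intro m hm
    exact DLin_coeff_eq_zero μ δ P hdeg q M
      ((Polynomial.degree_lt_iff_coeff_zero q M).mp (Polynomial.mem_degreeLT.mp hq))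
      m (by omega)
  have claim2 : A ⊓ B = Submodule.map (DLin μ P) (Polynomial.degreeLT ℂ M) := by
    apply le_antisymm
    · rintro x ⟨⟨q, rfl⟩, hxB⟩
      by_cases hqM : q.degree < (M : WithBot ℕ)
      · exact ⟨q, Polynomial.mem_degreeLT.mpr hqM, rfl⟩
      · exfalso
        push_neg at hqM
        have hq0 : q ≠ 0 := by
          intro h
          rw [h, Polynomial.degree_zero] at hqM
          exact absurd hqM (by simp)
        set k := q.natDegree with hk
        have hMk : M ≤ k := by
          have := le_trans hqM (Polynomial.degree_le_natDegree)
          exact_mod_cast this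
        have hμk : μ ≤ δ + k := by omega
        set n := δ + k - μ with hn
        have hnk : n + μ = δ + k := by omega
        have htop : (DLin μ P q).coeff n = q.coeff k * (Rpoly μ δ P).eval (k : ℂ) :=
          DLin_coeff_top μ δ P hdeg q k n
            (fun m hm => Polynomial.coeff_eq_zero_of_natDegree_lt hm) hnk
        have hzero : (DLin μ P q).coeff n = 0 := by
          refine (Polynomial.degree_lt_iff_coeff_zero _ N).mp
            (Polynomial.mem_degreeLT.mp hxB) n (by omega)
        rw [hzero] at htop
        have hqk : q.coeff k ≠ 0 := by
          rw [hk]; exact Polynomial.leadingCoeff_ne_zero.mpr hq0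
        exact (mul_ne_zero hqk (hM2 k hMk)) htop.symm
    · rintro x ⟨q, hq, rfl⟩
      exact ⟨⟨q, rfl⟩, hmapB q hq⟩
  refine ⟨claim1, claim2, ?_⟩
  -- the induced equivalence
  set K : Submodule ℂ B :=
    (Submodule.map (DLin μ P) (Polynomial.degreeLT ℂ M)).comap B.subtype with hK
  set φ : B →ₗ[ℂ] Polynomial ℂ ⧸ A := A.mkQ.comp B.subtype with hφ
  have hKker : K ≤ LinearMap.ker φ := by
    intro x hx
    rw [LinearMap.mem_ker, hφ, LinearMap.comp_apply, Submodule.mkQ_apply,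
      Submodule.Quotient.mk_eq_zero]
    rcases hx with ⟨q, _, hq⟩
    exact ⟨q, hq⟩
  have hkerK : LinearMap.ker φ ≤ K := by
    intro x hx
    rw [LinearMap.mem_ker, hφ, LinearMap.comp_apply, Submodule.mkQ_apply,
      Submodule.Quotient.mk_eq_zero] at hx
    have : (x : Polynomial ℂ) ∈ A ⊓ B := ⟨hx, x.2⟩
    rw [claim2] at this
    exact this
  set e0 : (B ⧸ K) →ₗ[ℂ] Polynomial ℂ ⧸ A := K.liftQ φ hKker with he0
  have hinj : Function.Injective e0 :=
    LinearMap.ker_eq_bot.mp (Submodule.ker_liftQ_eq_bot K φ hKker hkerK)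
  have hsurj : Function.Surjective e0 := by
    intro y
    obtain ⟨p, rfl⟩ := A.mkQ_surjective y
    obtain ⟨a, ha, b, hb, hab⟩ := Submodule.mem_sup.mp (hsup p)
    refine ⟨Submodule.Quotient.mk ⟨b, hb⟩, ?_⟩
    rw [he0, Submodule.liftQ_apply, hφ, LinearMap.comp_apply, Submodule.mkQ_apply,
      Submodule.mkQ_apply]
    refine (Submodule.Quotient.eq A).mpr ?_
    have hba : B.subtype ⟨b, hb⟩ - p = -a := by
      simp only [Submodule.subtype_apply, ← hab]; ring
    rw [hba]
    exact A.neg_mem ha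
  refine ⟨LinearEquiv.ofBijective e0 ⟨hinj, hsurj⟩, fun q => ?_⟩
  simp only [LinearEquiv.ofBijective_apply, he0, Submodule.liftQ_apply, hφ,
    LinearMap.comp_apply, Submodule.mkQ_apply, Submodule.subtype_apply]
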